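/- Let k be a field and p ∈ k with p ≠ 0 and p² ≠ 1. In the polynomial ring S = k[X, Y], the ideal J generated by X³Y − pX⁵ and Y² − X⁴ contains X⁷, and the homogeneous ideal (X³Y, Y², X⁷) defines a quotient S/(X³Y, Y², X⁷) with Hilbert function 1, 2, 2, 2, 1, 1, 1, 0, 0, …. -/

import Mathlib

open MvPolynomial

/-- The Hilbert function of `k[X,Y]/K` in degree `n`: `dim_k S_n − dim_k K_n`. -/
noncomputable def hilbFn (k : Type*) [Field k] (K : Ideal (MvPolynomial (Fin 2) k)) (n : ℕ) : ℕ :=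
  Module.finrank k (homogeneousSubmodule (Fin 2) k n) -
    Module.finrank k
      (Submodule.restrictScalars k K ⊓ homogeneousSubmodule (Fin 2) k n : Submodule k _)

namespace Case2b2Aux

noncomputable def mk2 (a b : ℕ) : Fin 2 →₀ ℕ := Finsupp.single 0 a + Finsupp.single 1 b

@[simp] lemma mk2_apply_zero (a b : ℕ) : mk2 a b 0 = a := by
  simp [mk2, Finsupp.single_apply]

@[simp] lemma mk2_apply_one (a b : ℕ) : mk2 a b 1 = b := by
  simp [mk2, Finsupp.single_apply]

lemma eq_mk2 (d : Fin 2 →₀ ℕ) : d = mk2 (d 0) (d 1) := by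
  ext i; fin_cases i <;> simp

lemma mk2_le_mk2 {a b c d : ℕ} : mk2 a b ≤ mk2 c d ↔ a ≤ c ∧ b ≤ d := by
  constructor
  · intro h
    exact ⟨by simpa using h 0, by simpa using h 1⟩
  · rintro ⟨h1, h2⟩ i
    fin_cases i <;> simpa

lemma mk2_inj {a b c d : ℕ} : mk2 a b = mk2 c d ↔ a = c ∧ b = d := by
  constructor
  · intro h
    exact ⟨by simpa using DFunLike.congr_fun h 0, by simpa using DFunLike.congr_fun h 1⟩
  · rintro ⟨rfl, rfl⟩; rfl

lemma degree_eq (d : Fin 2 →₀ ℕ) : d.degree = d 0 + d 1 := by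
  rw [Finsupp.degree_apply, Finset.sum_subset (Finset.subset_univ _)
    (fun i _ hi => Finsupp.notMem_support_iff.mp hi), Fin.sum_univ_two]

@[simp] lemma degree_mk2 (a b : ℕ) : (mk2 a b).degree = a + b := by
  simp [degree_eq]

variable {k : Type*} [Field k]

lemma gen_eq (k : Type*) [Field k] :
    ({X 0 ^ 3 * X 1, X 1 ^ 2, X 0 ^ 7} : Set (MvPolynomial (Fin 2) k)) =
      (fun d => monomial d (1 : k)) '' {mk2 3 1, mk2 0 2, mk2 7 0} := by
  rw [Set.image_insert_eq, Set.image_insert_eq, Set.image_singleton]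
  have h1 : (X 0 ^ 3 * X 1 : MvPolynomial (Fin 2) k) = monomial (mk2 3 1) 1 := by
    rw [X_pow_eq_monomial, X, monomial_mul, mk2, one_mul]
  have h2 : (X 1 ^ 2 : MvPolynomial (Fin 2) k) = monomial (mk2 0 2) 1 := by
    rw [X_pow_eq_monomial, mk2, Finsupp.single_zero, zero_add]
  have h3 : (X 0 ^ 7 : MvPolynomial (Fin 2) k) = monomial (mk2 7 0) 1 := by
    rw [X_pow_eq_monomial, mk2, Finsupp.single_zero, add_zero]
  rw [h1, h2, h3]

lemma mem_K {p : MvPolynomial (Fin 2) k} :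
    p ∈ Ideal.span ({X 0 ^ 3 * X 1, X 1 ^ 2, X 0 ^ 7} : Set (MvPolynomial (Fin 2) k)) ↔
      ∀ m ∈ p.support, mk2 3 1 ≤ m ∨ mk2 0 2 ≤ m ∨ mk2 7 0 ≤ m := by
  rw [gen_eq, mem_ideal_span_monomial_image]
  simp [Set.mem_insert_iff]

lemma inf_eq_supported (n : ℕ) (F : Finset (Fin 2 →₀ ℕ))
    (h : ∀ m : Fin 2 →₀ ℕ,
      (m.degree = n ∧ (mk2 3 1 ≤ m ∨ mk2 0 2 ≤ m ∨ mk2 7 0 ≤ m)) ↔ m ∈ F) :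
    (Submodule.restrictScalars k
        (Ideal.span ({X 0 ^ 3 * X 1, X 1 ^ 2, X 0 ^ 7} : Set (MvPolynomial (Fin 2) k))) ⊓
      homogeneousSubmodule (Fin 2) k n) =
      AddMonoidAlgebra.supported k k (↑F : Set (Fin 2 →₀ ℕ)) := by
  ext p
  rw [Submodule.mem_inf, Submodule.restrictScalars_mem, mem_K,
    homogeneousSubmodule_eq_finsupp_supported, AddMonoidAlgebra.mem_supported, AddMonoidAlgebra.mem_supported]
  constructor
  · rintro ⟨h1, h2⟩ m hm
    exact (h m).mp ⟨h2 hm, h1 m hm⟩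
  · intro hs
    constructor
    · intro m hm; exact ((h m).mpr (hs hm)).2
    · intro m hm; exact ((h m).mpr (hs hm)).1

lemma finrank_supported (F : Finset (Fin 2 →₀ ℕ)) :
    Module.finrank k
      (AddMonoidAlgebra.supported k k (↑F : Set (Fin 2 →₀ ℕ)) : Submodule k (MvPolynomial (Fin 2) k)) =
      F.card := by
  rw [(AddMonoidAlgebra.supportedEquivFinsupp (S := k) (R := k) (↑F : Set (Fin 2 →₀ ℕ))).finrank_eq,
    Module.finrank_finsupp_self]
  simp

lemma degSet_eq (n : ℕ) :
    {d : Fin 2 →₀ ℕ | d.degree = n} =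
      ↑((Finset.range (n + 1)).image fun a => mk2 a (n - a)) := by
  ext d
  simp only [Set.mem_setOf_eq, Finset.coe_image, Set.mem_image, Finset.mem_coe,
    Finset.mem_range]
  constructor
  · intro hd
    refine ⟨d 0, ?_, ?_⟩
    · have := degree_eq d; omega
    · have h2 := degree_eq d
      conv_rhs => rw [eq_mk2 d]
      rw [mk2_inj]
      omega
  · rintro ⟨a, ha, rfl⟩
    rw [degree_mk2]; omega

lemma finrank_homog (k : Type*) [Field k] (n : ℕ) :
    Module.finrank k (homogeneousSubmodule (Fin 2) k n) = n + 1 := by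
  have hcard : (Finset.image (fun a => mk2 a (n - a)) (Finset.range (n + 1))).card = n + 1 := by
    rw [Finset.card_image_of_injOn, Finset.card_range]
    intro a ha b hb hab
    rw [mk2_inj] at hab
    exact hab.1
  rw [homogeneousSubmodule_eq_finsupp_supported, degSet_eq n]
  exact (finrank_supported _).trans hcard

noncomputable def pmk (P : Finset (ℕ × ℕ)) : Finset (Fin 2 →₀ ℕ) :=
  P.image fun q => mk2 q.1 q.2

lemma card_pmk (P : Finset (ℕ × ℕ)) : (pmk P).card = P.card := by
  rw [pmk, Finset.card_image_of_injOn]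
  intro q _ r _ hqr
  rw [mk2_inj] at hqr
  exact Prod.ext hqr.1 hqr.2

lemma mem_pmk {a b : ℕ} {P : Finset (ℕ × ℕ)} : mk2 a b ∈ pmk P ↔ (a, b) ∈ P := by
  simp only [pmk, Finset.mem_image, mk2_inj, Prod.exists]
  constructor
  · rintro ⟨x, y, hxy, rfl, rfl⟩; exact hxy
  · intro h; exact ⟨a, b, h, rfl, rfl⟩

lemma hilb_eval (K' : Ideal (MvPolynomial (Fin 2) k))
    (hK : K' = Ideal.span ({X 0 ^ 3 * X 1, X 1 ^ 2, X 0 ^ 7} : Set (MvPolynomial (Fin 2) k)))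
    (n : ℕ) (P : Finset (ℕ × ℕ))
    (h : ∀ a b : ℕ, (a + b = n ∧ ((3 ≤ a ∧ 1 ≤ b) ∨ 2 ≤ b ∨ 7 ≤ a)) ↔ (a, b) ∈ P) :
    hilbFn k K' n = (n + 1) - P.card := by
  have h2 : ∀ m : Fin 2 →₀ ℕ,
      (m.degree = n ∧ (mk2 3 1 ≤ m ∨ mk2 0 2 ≤ m ∨ mk2 7 0 ≤ m)) ↔ m ∈ pmk P := by
    intro m
    rw [eq_mk2 m, mem_pmk, degree_mk2, mk2_le_mk2, mk2_le_mk2, mk2_le_mk2]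
    constructor
    · rintro ⟨h1, h3⟩
      exact (h _ _).mp ⟨h1, by omega⟩
    · intro hm
      have := (h _ _).mpr hm
      exact ⟨this.1, by omega⟩
  rw [hilbFn, hK, finrank_homog, inf_eq_supported n (pmk P) h2]
  exact congrArg (fun t => n + 1 - t) ((finrank_supported _).trans (card_pmk P))

lemma hilb_top (K' : Ideal (MvPolynomial (Fin 2) k))
    (hK : K' = Ideal.span ({X 0 ^ 3 * X 1, X 1 ^ 2, X 0 ^ 7} : Set (MvPolynomial (Fin 2) k)))
    (j : ℕ) (hj : 7 ≤ j) : hilbFn k K' j = 0 := by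
  have hle : homogeneousSubmodule (Fin 2) k j ≤ Submodule.restrictScalars k K' := by
    intro q hq
    rw [Submodule.restrictScalars_mem, hK, mem_K]
    intro m hm
    have hdeg : m.degree = j := by
      rw [homogeneousSubmodule_eq_finsupp_supported, AddMonoidAlgebra.mem_supported] at hq
      exact hq hm
    rw [degree_eq] at hdeg
    rw [eq_mk2 m, mk2_le_mk2, mk2_le_mk2, mk2_le_mk2]
    omega
  rw [hilbFn, inf_eq_right.mpr hle, Nat.sub_self]

end Case2b2Aux

open Case2b2Aux in
/-- Let `k` be a field and `p ∈ k` with `p ≠ 0`, `p² ≠ 1`.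
In `S = k[X,Y]` the ideal `J = (X³Y − pX⁵, Y² − X⁴)` contains `X⁷`, and
`S/(X³Y, Y², X⁷)` has Hilbert function `1, 2, 2, 2, 1, 1, 1, 0, 0, …`. -/
theorem case_2b2_ideal
    (k : Type*) [Field k] (p : k) (hp : p ≠ 0) (hp1 : p ^ 2 ≠ 1) :
    ((X 0 : MvPolynomial (Fin 2) k) ^ 7 ∈
        Ideal.span ({X 0 ^ 3 * X 1 - C p * X 0 ^ 5, X 1 ^ 2 - X 0 ^ 4} :
          Set (MvPolynomial (Fin 2) k))) ∧
      hilbFn k (Ideal.span {X 0 ^ 3 * X 1, X 1 ^ 2, X 0 ^ 7}) 0 = 1 ∧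
      hilbFn k (Ideal.span {X 0 ^ 3 * X 1, X 1 ^ 2, X 0 ^ 7}) 1 = 2 ∧
      hilbFn k (Ideal.span {X 0 ^ 3 * X 1, X 1 ^ 2, X 0 ^ 7}) 2 = 2 ∧
      hilbFn k (Ideal.span {X 0 ^ 3 * X 1, X 1 ^ 2, X 0 ^ 7}) 3 = 2 ∧
      hilbFn k (Ideal.span {X 0 ^ 3 * X 1, X 1 ^ 2, X 0 ^ 7}) 4 = 1 ∧
      hilbFn k (Ideal.span {X 0 ^ 3 * X 1, X 1 ^ 2, X 0 ^ 7}) 5 = 1 ∧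
      hilbFn k (Ideal.span {X 0 ^ 3 * X 1, X 1 ^ 2, X 0 ^ 7}) 6 = 1 ∧
      (∀ j, 7 ≤ j → hilbFn k (Ideal.span {X 0 ^ 3 * X 1, X 1 ^ 2, X 0 ^ 7}) j = 0) := by
  have hc : (1 : k) - p ^ 2 ≠ 0 := by
    intro h
    exact hp1 (sub_eq_zero.mp h).symm
  constructor
  · rw [Ideal.mem_span_pair]
    refine ⟨C ((1 - p ^ 2)⁻¹) * (C p * X 0 ^ 2 + X 1),
      C ((1 - p ^ 2)⁻¹) * (-(X 0 ^ 3)), ?_⟩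
    have key : (C p * (X 0 : MvPolynomial (Fin 2) k) ^ 2 + X 1) *
        (X 0 ^ 3 * X 1 - C p * X 0 ^ 5) + (-(X 0 ^ 3)) * (X 1 ^ 2 - X 0 ^ 4) =
        C (1 - p ^ 2) * X 0 ^ 7 := by
      rw [map_sub, map_pow, map_one]
      ring
    have h1 : C ((1 - p ^ 2)⁻¹) * C (1 - p ^ 2) = (1 : MvPolynomial (Fin 2) k) := by
      rw [← C_mul, inv_mul_cancel₀ hc, C_1]
    linear_combination C ((1 - p ^ 2)⁻¹) * key + (X 0 : MvPolynomial (Fin 2) k) ^ 7 * h1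
  refine ⟨?_, ?_, ?_, ?_, ?_, ?_, ?_, fun j hj => hilb_top _ rfl j hj⟩
  · rw [hilb_eval _ rfl 0 (∅ : Finset (ℕ × ℕ))
      (by intro a b; simp only [Finset.notMem_empty, iff_false]; omega)]
    decide
  · rw [hilb_eval _ rfl 1 (∅ : Finset (ℕ × ℕ))
      (by intro a b; simp only [Finset.notMem_empty, iff_false]; omega)]
    decide
  · rw [hilb_eval _ rfl 2 ({(0, 2)} : Finset (ℕ × ℕ))
      (by intro a b; simp only [Finset.mem_singleton, Prod.mk.injEq]; omega)]
    decide
  · rw [hilb_eval _ rfl 3 ({(1, 2), (0, 3)} : Finset (ℕ × ℕ))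
      (by intro a b;
          simp only [Finset.mem_insert, Finset.mem_singleton, Prod.mk.injEq]; omega)]
    decide
  · rw [hilb_eval _ rfl 4 ({(3, 1), (2, 2), (1, 3), (0, 4)} : Finset (ℕ × ℕ))
      (by intro a b;
          simp only [Finset.mem_insert, Finset.mem_singleton, Prod.mk.injEq]; omega)]
    decide
  · rw [hilb_eval _ rfl 5 ({(4, 1), (3, 2), (2, 3), (1, 4), (0, 5)} : Finset (ℕ × ℕ))
      (by intro a b;
          simp only [Finset.mem_insert, Finset.mem_singleton, Prod.mk.injEq]; omega)]
    decide
  · rw [hilb_eval _ rfl 6 ({(5, 1), (4, 2), (3, 3), (2, 4), (1, 5), (0, 6)} : Finset (ℕ × ℕ))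
      (by intro a b;
          simp only [Finset.mem_insert, Finset.mem_singleton, Prod.mk.injEq]; omega)]
    decide
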